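/- Let F : ℝ^d → ℝ be λ-strongly convex and L-smooth with minimizer θ*. If θ₁ satisfies ‖θ₁ - θ*‖ ≤ (1/4)√(λ/L)·Δ and θ₂ satisfies ‖θ₂ - θ*'‖ ≤ (1/4)√(λ/L)·Δ where ‖θ*' - θ*‖ ≥ Δ, then F(θ₂) - F(θ₁) ≥ (λ/4)·Δ². -/

import Mathlib

open InnerProductSpace

/-- separation of population losses of two clusters. -/
theorem cluster_loss_separation {d : ℕ}
    (F : EuclideanSpace ℝ (Fin d) → ℝ) (gradF : EuclideanSpace ℝ (Fin d) → EuclideanSpace ℝ (Fin d))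
    (lam L Δ : ℝ) (hlam : 0 < lam) (hlamL : lam ≤ L) (hΔ : 0 < Δ)
    (θstar θstar' θ₁ θ₂ : EuclideanSpace ℝ (Fin d))
    (hdiff : ∀ x, HasGradientAt F (gradF x) x)
    (hsc : ∀ x y, F y ≥ F x + ⟪gradF x, y - x⟫_ℝ + lam / 2 * ‖y - x‖ ^ 2)
    (hsmooth : ∀ x y, ‖gradF x - gradF y‖ ≤ L * ‖x - y‖)
    (hmin : ∀ θ, F θstar ≤ F θ)
    (h1 : ‖θ₁ - θstar‖ ≤ 1 / 4 * Real.sqrt (lam / L) * Δ)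
    (h2 : ‖θ₂ - θstar'‖ ≤ 1 / 4 * Real.sqrt (lam / L) * Δ)
    (hsep : ‖θstar' - θstar‖ ≥ Δ) :
    F θ₂ - F θ₁ ≥ lam / 4 * Δ ^ 2 := by
  have hL : 0 < L := lt_of_lt_of_le hlam hlamL
  -- gradient at the minimizer is zero
  have hloc : IsLocalMin F θstar := Filter.Eventually.of_forall hmin
  have hg0 : gradF θstar = 0 := by
    have h := hloc.hasFDerivAt_eq_zero (hdiff θstar).hasFDerivAt
    have := congrArg (InnerProductSpace.toDual ℝ (EuclideanSpace ℝ (Fin d))).symm h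
    simpa using this
  set s := Real.sqrt (lam / L) with hs
  have hs0 : 0 ≤ s := Real.sqrt_nonneg _
  have hs2 : s ^ 2 = lam / L := Real.sq_sqrt (by positivity)
  have hs1 : s ≤ 1 := by
    rw [hs, show (1 : ℝ) = Real.sqrt 1 by simp]
    exact Real.sqrt_le_sqrt (by rw [div_le_one hL]; exact hlamL)
  set r1 := ‖θ₁ - θstar‖ with hr1
  set r2 := ‖θ₂ - θstar‖ with hr2
  have hr1nn : 0 ≤ r1 := norm_nonneg _
  -- lower bound on r2
  have hr2lb : r2 ≥ Δ - s / 4 * Δ := by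
    have := norm_sub_norm_le (θstar' - θstar) (θstar' - θ₂)
    have heq : θstar' - θstar - (θstar' - θ₂) = θ₂ - θstar := by abel
    rw [heq] at this
    have h2' : ‖θstar' - θ₂‖ ≤ 1 / 4 * s * Δ := by rwa [norm_sub_rev] at h2
    linarith
  -- upper bound on F θ₁
  have hub : F θ₁ ≤ F θstar + L * r1 ^ 2 - lam / 2 * r1 ^ 2 := by
    have h := hsc θ₁ θstar
    have hinner : ⟪gradF θ₁, θstar - θ₁⟫_ℝ ≥ -(L * r1 * r1) := by
      have hcs : |⟪gradF θ₁, θstar - θ₁⟫_ℝ| ≤ ‖gradF θ₁‖ * ‖θstar - θ₁‖ :=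
        abs_real_inner_le_norm _ _
      have hgb : ‖gradF θ₁‖ ≤ L * r1 := by
        have := hsmooth θ₁ θstar
        rwa [hg0, sub_zero] at this
      have hn : ‖θstar - θ₁‖ = r1 := norm_sub_rev _ _
      have : ‖gradF θ₁‖ * ‖θstar - θ₁‖ ≤ L * r1 * r1 := by
        rw [hn]; exact mul_le_mul_of_nonneg_right hgb hr1nn
      have := (abs_le.mp (le_trans hcs this)).1
      linarith [neg_abs_le ⟪gradF θ₁, θstar - θ₁⟫_ℝ]
    have hn : ‖θstar - θ₁‖ = r1 := norm_sub_rev _ _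
    rw [hn] at h
    nlinarith
  -- lower bound on F θ₂
  have hlb : F θ₂ ≥ F θstar + lam / 2 * r2 ^ 2 := by
    have h := hsc θstar θ₂
    rw [hg0] at h
    simpa using h
  -- arithmetic
  have hr1ub : r1 ≤ s / 4 * Δ := by rw [hr1]; linarith
  have hr2nn : 0 ≤ r2 := norm_nonneg _
  have hlamL' : lam = s ^ 2 * L := by rw [hs2, div_mul_cancel₀ _ hL.ne']
  have hpos : (0:ℝ) ≤ Δ - s / 4 * Δ := by nlinarith
  have hA : r2 ^ 2 ≥ (Δ - s / 4 * Δ) ^ 2 := pow_le_pow_left₀ hpos hr2lb 2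
  have hB : r1 ^ 2 ≤ (s / 4 * Δ) ^ 2 := pow_le_pow_left₀ hr1nn hr1ub 2
  have hC : (L - lam / 2) * r1 ^ 2 ≤ (L - lam / 2) * (s / 4 * Δ) ^ 2 :=
    mul_le_mul_of_nonneg_left hB (by linarith)
  have hD : lam / 2 * (Δ - s / 4 * Δ) ^ 2 - (L - lam / 2) * (s / 4 * Δ) ^ 2
      ≥ lam / 4 * Δ ^ 2 := by
    rw [hlamL']
    have hid : s^2*L/2*(Δ - s/4*Δ)^2 - (L - s^2*L/2)*(s/4*Δ)^2 - s^2*L/4*Δ^2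
        = L*Δ^2*(s^2*((1-s)*(3-s)))/16 := by ring
    have hnn : 0 ≤ s^2*((1-s)*(3-s)) :=
      mul_nonneg (sq_nonneg s) (mul_nonneg (by linarith) (by linarith))
    have hnn2 : 0 ≤ L*Δ^2*(s^2*((1-s)*(3-s)))/16 :=
      div_nonneg (mul_nonneg (mul_nonneg hL.le (sq_nonneg Δ)) hnn) (by norm_num)
    linarith
  have hE : lam / 2 * r2 ^ 2 ≥ lam / 2 * (Δ - s / 4 * Δ) ^ 2 :=
    mul_le_mul_of_nonneg_left hA (by linarith)
  linarith
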